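/- Every Borel graph on a standard Borel space with all degrees at most D admits a Borel proper vertex coloring with D+1 colors (Kechris–Solecki–Todorcevic). -/

import Mathlib

open MeasureTheory

/-- The ball of graph radius `r` around `x` in the graph `G` (as a vertex set,
including `x` itself). -/
def gball {I : Type*} (G : I → I → Prop) (x : I) : ℕ → Set I
  | 0 => {x}
  | r + 1 => gball G x r ∪ {z | ∃ w ∈ gball G x r, G w z}

/-- An `r`-neighborhood isomorphism between `x` and `y`: a rooted isomorphism of the
graph balls `B(x,r) → B(y,r)` sending `x` to `y` (encoded as a global map that is a
bijection between the balls preserving adjacency in both directions). -/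
def IsNbhdIso {I : Type*} (G : I → I → Prop) (r : ℕ) (x y : I) (φ : I → I) : Prop :=
  φ x = y ∧ Set.BijOn φ (gball G x r) (gball G y r) ∧
    ∀ u ∈ gball G x r, ∀ v ∈ gball G x r, (G u v ↔ G (φ u) (φ v))

/-- The displacement `d₀(φ) = sup_{z ∈ B(x,r)} d₀(z, φ(z))` of a neighborhood map. -/
noncomputable def disp {I : Type*} [MetricSpace I] (G : I → I → Prop) (x : I) (r : ℕ)
    (φ : I → I) : ℝ :=
  ⨆ z : gball G x r, dist (z : I) (φ z)

/-- The neighborhood-isomorphism metric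
`d(x,y) = inf over r and r-neighborhood isomorphisms φ of max {1/(r+1), d₀(φ)}`. -/
noncomputable def nbhdDist {I : Type*} [MetricSpace I] (G : I → I → Prop) (x y : I) : ℝ :=
  sInf {m | ∃ (r : ℕ) (φ : I → I), IsNbhdIso G r x y φ ∧
    m = max (1 / ((r : ℝ) + 1)) (disp G x r φ)}

/-- `degIn G B x` is the number of neighbors of `x` in `B`. -/
noncomputable def degIn {I : Type*} (G : I → I → Prop) (B : Set I) (x : I) : ℕ :=
  {y | y ∈ B ∧ G x y}.ncard

/-- The vertex set of the connected component of `x`. -/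
def compSet {I : Type*} (G : I → I → Prop) (x : I) : Set I := {y | Relation.ReflTransGen G x y}


section KSTHelpers

open Set

set_option maxHeartbeats 1000000

/-- Bounded-sections projection lemma (finite Lusin–Novikov). -/
theorem ln_aux {X : Type*} [MeasurableSpace X] [StandardBorelSpace X] :
    ∀ (N : ℕ) (T : Set (X × ℝ)), MeasurableSet T →
    (∀ x, {t | (x, t) ∈ T}.Finite) → (∀ x, {t | (x, t) ∈ T}.ncard ≤ N) →
    ∀ A : Set ℝ, MeasurableSet A → MeasurableSet {x | ∃ t ∈ A, (x, t) ∈ T} := by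
  intro N
  induction N with
  | zero =>
    intro T hT hfin hcard A hA
    have : {x : X | ∃ t ∈ A, (x, t) ∈ T} = ∅ := by
      ext x
      simp only [mem_setOf_eq, mem_empty_iff_false, iff_false]
      rintro ⟨t, _, ht⟩
      have h0 : {t | (x, t) ∈ T} = ∅ :=
        (Set.ncard_eq_zero (hfin x)).1 (Nat.le_zero.1 (hcard x))
      exact absurd (h0 ▸ ht : t ∈ (∅ : Set ℝ)) (notMem_empty t)
    rw [this]; exact MeasurableSet.empty
  | succ N IH =>
    intro T hT hfin hcard A hA
    set Tup : Set (X × (Fin (N + 1) → ℝ)) :=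
      {p | StrictMono p.2 ∧ ∀ i, (p.1, p.2 i) ∈ T} with hTupDef
    have hTupMeas : MeasurableSet Tup := by
      have h1 : MeasurableSet {p : X × (Fin (N + 1) → ℝ) | StrictMono p.2} := by
        have he : {p : X × (Fin (N + 1) → ℝ) | StrictMono p.2}
            = ⋂ i, ⋂ j, ⋂ (_ : i < j), {p : X × (Fin (N+1) → ℝ) | p.2 i < p.2 j} := by
          ext p
          simp only [mem_setOf_eq, mem_iInter]
          exact ⟨fun h i j hij => h hij, fun h i j hij => h i j hij⟩
        rw [he]
        refine MeasurableSet.iInter fun i => MeasurableSet.iInter fun j =>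
          MeasurableSet.iInter fun _ => ?_
        exact measurableSet_lt measurable_snd.eval
          measurable_snd.eval
      have h2 : MeasurableSet {p : X × (Fin (N + 1) → ℝ) | ∀ i, (p.1, p.2 i) ∈ T} := by
        have he : {p : X × (Fin (N + 1) → ℝ) | ∀ i, (p.1, p.2 i) ∈ T}
            = ⋂ i, (fun p : X × (Fin (N+1) → ℝ) => (p.1, p.2 i)) ⁻¹' T := by
          ext p; simp [Set.mem_iInter]
        rw [he]
        exact MeasurableSet.iInter fun i =>
          hT.preimage (measurable_fst.prodMk measurable_snd.eval)
      exact h1.inter h2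
    have hrange : ∀ p ∈ Tup, Set.range p.2 = {t | (p.1, t) ∈ T} := by
      rintro ⟨x, v⟩ ⟨hv1, hv2⟩
      refine Set.eq_of_subset_of_ncard_le ?_ ?_ (hfin x)
      · rintro t ⟨i, rfl⟩; exact hv2 i
      · calc {t | (x, t) ∈ T}.ncard ≤ N + 1 := hcard x
          _ = (Set.range v).ncard := by
              rw [← Nat.card_coe_set_eq, Nat.card_range_of_injective hv1.injective,
                Nat.card_eq_fintype_card, Fintype.card_fin]
    have hInj : Set.InjOn Prod.fst Tup := by
      rintro ⟨x, v⟩ hv ⟨x', w⟩ hw (h : x = x')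
      subst h
      have hr : Set.range v = Set.range w := by
        rw [hrange ⟨x, v⟩ hv, hrange ⟨x, w⟩ hw]
      have hwf : WellFoundedLT (Fin (N+1)) := inferInstance
      have := (StrictMono.range_inj hv.1 hw.1).1 hr
      exact congrArg (Prod.mk x) this
    set Acard : Set X := Prod.fst '' Tup with hAcardDef
    have hAcardMeas : MeasurableSet Acard :=
      hTupMeas.image_of_measurable_injOn measurable_fst hInj
    set Hit : Set (X × (Fin (N+1) → ℝ)) := Tup ∩ {p | ∃ i, p.2 i ∈ A} with hHitDef
    have hHitMeas : MeasurableSet Hit := by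
      refine hTupMeas.inter ?_
      have he : {p : X × (Fin (N+1) → ℝ) | ∃ i, p.2 i ∈ A}
          = ⋃ i, (fun p : X × (Fin (N+1) → ℝ) => p.2 i) ⁻¹' A := by
        ext p; simp [Set.mem_iUnion]
      rw [he]
      exact MeasurableSet.iUnion fun i =>
        hA.preimage measurable_snd.eval
    have hImgAMeas : MeasurableSet (Prod.fst '' Hit) :=
      hHitMeas.image_of_measurable_injOn measurable_fst (hInj.mono Set.inter_subset_left)
    set T' : Set (X × ℝ) := T ∩ (Acardᶜ ×ˢ (Set.univ : Set ℝ)) with hT'Def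
    have hT'Meas : MeasurableSet T' := hT.inter (hAcardMeas.compl.prod MeasurableSet.univ)
    have hT'sub : ∀ x, {t | (x, t) ∈ T'} ⊆ {t | (x, t) ∈ T} := by
      intro x t ht; exact ht.1
    have hT'fin : ∀ x, {t | (x, t) ∈ T'}.Finite := fun x => (hfin x).subset (hT'sub x)
    have hT'card : ∀ x, {t | (x, t) ∈ T'}.ncard ≤ N := by
      intro x
      by_cases hx : x ∈ Acard
      · have : {t | (x, t) ∈ T'} = ∅ := by
          ext t; simp only [mem_setOf_eq, mem_empty_iff_false, iff_false]
          rintro ⟨-, hmem, -⟩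
          exact hmem hx
        simp [this]
      · have hsec : {t | (x, t) ∈ T'} = {t | (x, t) ∈ T} := by
          ext t
          exact ⟨fun h => h.1, fun h => ⟨h, hx, trivial⟩⟩
        rw [hsec]
        by_contra hgt
        push_neg at hgt
        have hcd : {t | (x, t) ∈ T}.ncard = N + 1 :=
          le_antisymm (hcard x) hgt
        -- build a strictly increasing enumeration, contradicting x ∉ Acard
        set F : Finset ℝ := (hfin x).toFinset with hF
        have hFc : F.card = N + 1 := by
          rw [hF, ← Set.ncard_eq_toFinset_card _ (hfin x)]
          exact hcd
        set v : Fin (N+1) → ℝ := fun i => (F.orderIsoOfFin hFc i : ℝ) with hv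
        have hvmono : StrictMono v := fun a b hab =>
          Subtype.coe_lt_coe.2 ((F.orderIsoOfFin hFc).strictMono hab)
        have hvmem : ∀ i, (x, v i) ∈ T := by
          intro i
          have : v i ∈ F := (F.orderIsoOfFin hFc i).2
          rw [hF, Set.Finite.mem_toFinset] at this
          exact this
        exact hx ⟨(x, v), ⟨hvmono, hvmem⟩, rfl⟩
    have hIH := IH T' hT'Meas hT'fin hT'card A hA
    have hkey : {x : X | ∃ t ∈ A, (x, t) ∈ T}
        = Prod.fst '' Hit ∪ {x | ∃ t ∈ A, (x, t) ∈ T'} := by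
      ext x
      simp only [mem_setOf_eq, mem_union]
      constructor
      · rintro ⟨t, htA, htT⟩
        by_cases hx : x ∈ Acard
        · left
          obtain ⟨⟨x', v⟩, hvTup, (hx' : x' = x)⟩ := hx
          subst hx'
          have : t ∈ Set.range v := by
            rw [hrange ⟨x', v⟩ hvTup]; exact htT
          obtain ⟨i, rfl⟩ := this
          exact ⟨(x', v), ⟨hvTup, ⟨i, htA⟩⟩, rfl⟩
        · right
          exact ⟨t, htA, htT, hx, trivial⟩
      · rintro (⟨⟨x', v⟩, ⟨⟨hvm, hvT⟩, ⟨i, hiA⟩⟩, (hx' : x' = x)⟩ | ⟨t, htA, htT', -⟩)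
        · subst hx'
          exact ⟨v i, hiA, hvT i⟩
        · exact ⟨t, htA, htT'⟩
    rw [hkey]
    exact hImgAMeas.union hIH

/-- If `G` is a measurable graph relation with finite sections of cardinality at most `D`,
then the set of points with a `G`-neighbor in a measurable set `B` is measurable. -/
theorem nbrMeas {I : Type*} [MeasurableSpace I] [StandardBorelSpace I] {D : ℕ}
    {G : I → I → Prop} (hGmeas : MeasurableSet {p : I × I | G p.1 p.2})
    (hfin : ∀ x : I, {y | G x y}.Finite) (hdeg : ∀ x : I, {y | G x y}.ncard ≤ D)
    {B : Set I} (hB : MeasurableSet B) : MeasurableSet {x | ∃ y, G x y ∧ y ∈ B} := by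
  obtain ⟨e, he⟩ := exists_measurableEmbedding_real I
  have hmap : MeasurableEmbedding (Prod.map (fun x : I => x) e) :=
    MeasurableEmbedding.id.prodMap he
  set T : Set (I × ℝ) := Prod.map (fun x : I => x) e '' {p : I × I | G p.1 p.2} with hTdef
  have hTmeas : MeasurableSet T := hmap.measurableSet_image' hGmeas
  have hsec : ∀ x, {t | (x, t) ∈ T} = e '' {y | G x y} := by
    intro x
    ext t
    constructor
    · rintro ⟨⟨a, b⟩, hab, h2⟩
      obtain ⟨h3, h4⟩ := Prod.mk.injEq .. ▸ h2
      have hax : a = x := h3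
      exact ⟨b, hax ▸ hab, h4⟩
    · rintro ⟨y, hy, rfl⟩
      exact ⟨(x, y), hy, rfl⟩
  have key : {x | ∃ y, G x y ∧ y ∈ B} = {x | ∃ t ∈ e '' B, (x, t) ∈ T} := by
    ext x
    constructor
    · rintro ⟨y, hGy, hyB⟩
      exact ⟨e y, ⟨y, hyB, rfl⟩, ⟨(x, y), hGy, rfl⟩⟩
    · rintro ⟨t, ⟨b, hbB, rfl⟩, hT⟩
      have hT' : e b ∈ {t | (x, t) ∈ T} := hT
      rw [hsec] at hT'
      obtain ⟨y, hGy, hye⟩ := hT'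
      exact ⟨b, by rw [← he.injective hye]; exact hGy, hbB⟩
  rw [key]
  exact ln_aux D T hTmeas
    (fun x => by rw [hsec]; exact (hfin x).image e)
    (fun x => by rw [hsec]; exact le_trans (Set.ncard_image_le (hfin x)) (hdeg x))
    (e '' B) (he.measurableSet_image' hB)

/-- Characterization of `sInf` on nonempty sets of naturals. -/
theorem natInf_eq_iff' {S : Set ℕ} (hS : S.Nonempty) {n : ℕ} :
    sInf S = n ↔ n ∈ S ∧ ∀ m < n, m ∉ S := by
  constructor
  · rintro rfl
    exact ⟨Nat.sInf_mem hS, fun m hm => Nat.notMem_of_lt_sInf hm⟩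
  · rintro ⟨hn, hmin⟩
    refine le_antisymm (Nat.sInf_le hn) ?_
    by_contra hlt
    push_neg at hlt
    exact hmin _ hlt (Nat.sInf_mem hS)

/-- Pigeonhole: a finite set of naturals of cardinality at most `D` misses some `k ≤ D`. -/
theorem exists_le_notMem {V : Set ℕ} (hV : V.Finite) {D : ℕ} (h : V.ncard ≤ D) :
    ∃ k ≤ D, k ∉ V := by
  by_contra h'
  push_neg at h'
  have hsub : Set.Iic D ⊆ V := fun k hk => h' k hk
  have hle : (Set.Iic D).ncard ≤ V.ncard := Set.ncard_le_ncard hsub hV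
  have hIic : (Set.Iic D).ncard = D + 1 := by
    rw [← Finset.coe_Iic, Set.ncard_coe_finset, Nat.card_Iic]
  omega

/-- Greedy recoloring: given a relation `G` and a function `f0 : I → ℕ`, color each point by
the least natural number not used by its `G`-neighbors of strictly smaller `f0`-value. -/
noncomputable def col {I : Type*} (G : I → I → Prop) (f0 : I → ℕ) : ℕ → I → ℕ
  | n => fun x => sInf {k | ∀ y, G x y → ∀ _h : f0 y < n, col G f0 (f0 y) y ≠ k}
  termination_by n => n
  decreasing_by assumption

theorem col_eq {I : Type*} (G : I → I → Prop) (f0 : I → ℕ) (n : ℕ) (x : I) :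
    col G f0 n x = sInf {k | ∀ y, G x y → f0 y < n → col G f0 (f0 y) y ≠ k} := by
  rw [col]

end KSTHelpers

set_option maxHeartbeats 1000000 in
/-- Kechris–Solecki–Todorcevic: every Borel graph with degrees at most `D`
on a standard Borel space admits a Borel proper coloring with `D + 1` colors. -/
theorem stmt3 {I : Type*} [MeasurableSpace I] [StandardBorelSpace I] (D : ℕ)
    (G : I → I → Prop) (hsym : Symmetric G) (hirr : Irreflexive G)
    (hGmeas : MeasurableSet {p : I × I | G p.1 p.2})
    (hfin : ∀ x : I, {y | G x y}.Finite) (hdeg : ∀ x : I, {y | G x y}.ncard ≤ D) :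
    ∃ c : I → Fin (D + 1), Measurable c ∧ ∀ x y : I, G x y → c x ≠ c y := by
  classical
  obtain ⟨e, he⟩ := exists_measurableEmbedding_real I
  -- countable family of "interval" sets
  set A : ℕ → Set I := fun n =>
    {x | ∃ p : ℚ × ℚ, Encodable.encode p = n ∧ (p.1 : ℝ) < e x ∧ e x < (p.2 : ℝ)} with hA
  have hAmeas : ∀ n, MeasurableSet (A n) := by
    intro n
    have : A n = ⋃ p : ℚ × ℚ, ⋃ _ : Encodable.encode p = n,
        e ⁻¹' Set.Ioo ((p.1 : ℝ)) ((p.2 : ℝ)) := by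
      ext x
      simp only [hA, Set.mem_setOf_eq, Set.mem_iUnion, Set.mem_preimage, Set.mem_Ioo]
      constructor
      · rintro ⟨p, h1, h2, h3⟩; exact ⟨p, h1, h2, h3⟩
      · rintro ⟨p, h1, h2, h3⟩; exact ⟨p, h1, h2, h3⟩
    rw [this]
    exact MeasurableSet.iUnion fun p => MeasurableSet.iUnion fun _ =>
      he.measurable measurableSet_Ioo
  set Good : ℕ → Set I := fun n => A n ∩ {x | ∃ y, G x y ∧ y ∈ A n}ᶜ with hGood
  have hGoodMeas : ∀ n, MeasurableSet (Good n) := fun n =>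
    (hAmeas n).inter (nbrMeas hGmeas hfin hdeg (hAmeas n)).compl
  -- every point belongs to some Good n
  have hGoodEx : ∀ x, ∃ n, x ∈ Good n := by
    intro x
    set F : Finset ℝ := ((hfin x).image e).toFinset with hF
    have hxF : e x ∉ F := by
      rw [hF, Set.Finite.mem_toFinset]
      rintro ⟨y, hGy, hye⟩
      exact hirr x (by rwa [he.injective hye] at hGy)
    -- a rational strictly between all smaller values of F and e x
    set S₁ : Finset ℝ := insert (e x - 1) (F.filter (fun r => r < e x)) with hS₁
    have hS₁ne : S₁.Nonempty := ⟨e x - 1, Finset.mem_insert_self _ _⟩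
    have hm₁ : S₁.max' hS₁ne < e x := by
      rw [Finset.max'_lt_iff]
      intro b hb
      rcases Finset.mem_insert.1 hb with rfl | hb
      · linarith
      · exact (Finset.mem_filter.1 hb).2
    obtain ⟨a, ha1, ha2⟩ := exists_rat_btwn hm₁
    set S₂ : Finset ℝ := insert (e x + 1) (F.filter (fun r => e x < r)) with hS₂
    have hS₂ne : S₂.Nonempty := ⟨e x + 1, Finset.mem_insert_self _ _⟩
    have hm₂ : e x < S₂.min' hS₂ne := by
      rw [Finset.lt_min'_iff]
      intro b hb
      rcases Finset.mem_insert.1 hb with rfl | hb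
      · linarith
      · exact (Finset.mem_filter.1 hb).2
    obtain ⟨b, hb1, hb2⟩ := exists_rat_btwn hm₂
    refine ⟨Encodable.encode (a, b), ?_, ?_⟩
    · exact ⟨(a, b), rfl, ha2, hb1⟩
    · rintro ⟨y, hGy, hyA⟩
      obtain ⟨p, hpe, hya, hyb⟩ := hyA
      obtain rfl : p = (a, b) := Encodable.encode_injective hpe
      simp only at hya hyb
      have hyF : e y ∈ F := by
        rw [hF, Set.Finite.mem_toFinset]; exact ⟨y, hGy, rfl⟩
      rcases lt_trichotomy (e y) (e x) with hlt | heq | hgt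
      · have hmemF : e y ∈ F.filter (fun r => r < e x) := Finset.mem_filter.2 ⟨hyF, hlt⟩
        have hmemS : e y ∈ S₁ := by rw [hS₁]; exact Finset.mem_insert_of_mem hmemF
        have : e y ≤ S₁.max' hS₁ne := Finset.le_max' S₁ (e y) hmemS
        linarith
      · exact hirr x (by rwa [he.injective heq] at hGy)
      · have hmemF : e y ∈ F.filter (fun r => e x < r) := Finset.mem_filter.2 ⟨hyF, hgt⟩
        have hmemS : e y ∈ S₂ := by rw [hS₂]; exact Finset.mem_insert_of_mem hmemF
        have : S₂.min' hS₂ne ≤ e y := Finset.min'_le S₂ (e y) hmemS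
        linarith
  set f0 : I → ℕ := fun x => sInf {n | x ∈ Good n} with hf0
  have hf0mem : ∀ x, x ∈ Good (f0 x) := fun x => Nat.sInf_mem (hGoodEx x)
  have hf0meas : Measurable f0 := by
    apply measurable_to_countable'
    intro n
    have : f0 ⁻¹' {n} = Good n ∩ ⋂ m, ⋂ _ : m < n, (Good m)ᶜ := by
      ext x
      simp only [Set.mem_preimage, Set.mem_singleton_iff, Set.mem_inter_iff, Set.mem_iInter,
        Set.mem_compl_iff]
      rw [hf0]
      exact natInf_eq_iff' (hGoodEx x)
    rw [this]
    exact (hGoodMeas n).inter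
      (MeasurableSet.iInter fun m => MeasurableSet.iInter fun _ => (hGoodMeas m).compl)
  have hf0proper : ∀ x y, G x y → f0 x ≠ f0 y := by
    intro x y hGxy heq
    have hx := hf0mem x
    have hy := hf0mem y
    rw [hGood] at hx hy
    exact hx.2 ⟨y, hGxy, heq ▸ hy.1⟩
  -- greedy recoloring
  have colSpec : ∀ (n : ℕ) (x : I),
      ∃ k ≤ D, (∀ y, G x y → f0 y < n → col G f0 (f0 y) y ≠ k) := by
    intro n x
    have hVfin : ((fun y => col G f0 (f0 y) y) '' {y | G x y}).Finite := (hfin x).image _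
    have hVcard : ((fun y => col G f0 (f0 y) y) '' {y | G x y}).ncard ≤ D :=
      le_trans (Set.ncard_image_le (hfin x)) (hdeg x)
    obtain ⟨k, hkD, hkV⟩ := exists_le_notMem hVfin hVcard
    exact ⟨k, hkD, fun y hGy _ hc => hkV ⟨y, hGy, hc⟩⟩
  have colNe : ∀ (n : ℕ) (x : I),
      {k | ∀ y, G x y → f0 y < n → col G f0 (f0 y) y ≠ k}.Nonempty := by
    intro n x
    obtain ⟨k, _, hk⟩ := colSpec n x
    exact ⟨k, hk⟩
  have colMem : ∀ (n : ℕ) (x : I), ∀ y, G x y → f0 y < n →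
      col G f0 (f0 y) y ≠ col G f0 n x := by
    intro n x
    have := Nat.sInf_mem (colNe n x)
    rw [← col_eq] at this
    exact this
  have colLe : ∀ (n : ℕ) (x : I), col G f0 n x ≤ D := by
    intro n x
    obtain ⟨k, hkD, hk⟩ := colSpec n x
    rw [col_eq]
    exact le_trans (Nat.sInf_le hk) hkD
  -- measurability of each level
  have colMeas : ∀ n : ℕ, Measurable (fun x => col G f0 n x) := by
    intro n
    induction n using Nat.strong_induction_on with
    | _ n IH =>
    apply measurable_to_countable'
    intro k
    have hUmeas : ∀ j : ℕ, MeasurableSet {x | ∃ y, G x y ∧ y ∈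
        {y | f0 y < n ∧ col G f0 (f0 y) y = j}} := by
      intro j
      have hBmeas : MeasurableSet {y | f0 y < n ∧ col G f0 (f0 y) y = j} := by
        have : {y | f0 y < n ∧ col G f0 (f0 y) y = j}
            = ⋃ m, ⋃ _ : m < n, (f0 ⁻¹' {m} ∩ (fun y => col G f0 m y) ⁻¹' {j}) := by
          ext y
          simp only [Set.mem_setOf_eq, Set.mem_iUnion, Set.mem_inter_iff, Set.mem_preimage,
            Set.mem_singleton_iff]
          constructor
          · rintro ⟨h1, h2⟩
            exact ⟨f0 y, h1, rfl, h2⟩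
          · rintro ⟨m, hm, h1, h2⟩
            exact ⟨h1 ▸ hm, by rw [h1]; exact h2⟩
        rw [this]
        exact MeasurableSet.iUnion fun m => MeasurableSet.iUnion fun hm =>
          (hf0meas (measurableSet_singleton m)).inter (IH m hm (measurableSet_singleton j))
      exact nbrMeas hGmeas hfin hdeg hBmeas
    have hiff : ∀ (x : I) (j : ℕ),
        (x ∈ {x | ∃ y, G x y ∧ y ∈ {y | f0 y < n ∧ col G f0 (f0 y) y = j}})
          ↔ j ∉ {k | ∀ y, G x y → f0 y < n → col G f0 (f0 y) y ≠ k} := by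
      intro x j
      simp only [Set.mem_setOf_eq]
      push_neg
      constructor
      · rintro ⟨y, hGy, h1, h2⟩; exact ⟨y, hGy, h1, h2⟩
      · rintro ⟨y, hGy, h1, h2⟩; exact ⟨y, hGy, h1, h2⟩
    have hchar : (fun x => col G f0 n x) ⁻¹' {k}
        = {x | ∃ y, G x y ∧ y ∈ {y | f0 y < n ∧ col G f0 (f0 y) y = k}}ᶜ
          ∩ ⋂ j, ⋂ _ : j < k, {x | ∃ y, G x y ∧ y ∈
            {y | f0 y < n ∧ col G f0 (f0 y) y = j}} := by
      ext x
      simp only [Set.mem_preimage, Set.mem_singleton_iff, Set.mem_inter_iff,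
        Set.mem_compl_iff, Set.mem_iInter]
      rw [col_eq, natInf_eq_iff' (colNe n x)]
      constructor
      · rintro ⟨h1, h2⟩
        refine ⟨fun hc => ((hiff x k).1 hc) h1, fun j hj => (hiff x j).2 (h2 j hj)⟩
      · rintro ⟨h1, h2⟩
        refine ⟨?_, fun j hj => (hiff x j).1 (h2 j hj)⟩
        by_contra hc
        exact h1 ((hiff x k).2 hc)
    rw [hchar]
    exact (hUmeas k).compl.inter
      (MeasurableSet.iInter fun j => MeasurableSet.iInter fun _ => hUmeas j)
  -- the final coloring
  have hg : Measurable (fun x => col G f0 (f0 x) x) := by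
    apply measurable_to_countable'
    intro k
    have : (fun x => col G f0 (f0 x) x) ⁻¹' {k}
        = ⋃ n, (f0 ⁻¹' {n} ∩ (fun x => col G f0 n x) ⁻¹' {k}) := by
      ext x
      simp only [Set.mem_preimage, Set.mem_singleton_iff, Set.mem_iUnion, Set.mem_inter_iff]
      constructor
      · intro h; exact ⟨f0 x, rfl, h⟩
      · rintro ⟨n, h1, h2⟩; rw [h1]; exact h2
    rw [this]
    exact MeasurableSet.iUnion fun n =>
      (hf0meas (measurableSet_singleton n)).inter (colMeas n (measurableSet_singleton k))
  have hcm : Measurable (fun x =>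
      (⟨col G f0 (f0 x) x % (D + 1), Nat.mod_lt _ (Nat.succ_pos D)⟩ : Fin (D + 1))) := by
    have hcomp : (fun x =>
        (⟨col G f0 (f0 x) x % (D + 1), Nat.mod_lt _ (Nat.succ_pos D)⟩ : Fin (D + 1)))
        = (fun k : ℕ => (⟨k % (D + 1), Nat.mod_lt _ (Nat.succ_pos D)⟩ : Fin (D + 1)))
          ∘ (fun x => col G f0 (f0 x) x) := rfl
    rw [hcomp]
    exact Measurable.comp measurable_from_nat hg
  refine ⟨fun x => (⟨col G f0 (f0 x) x % (D + 1), Nat.mod_lt _ (Nat.succ_pos D)⟩ : Fin (D + 1)),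
    hcm, ?_⟩
  · intro x y hGxy heq
    have hx := Nat.mod_eq_of_lt (Nat.lt_succ_of_le (colLe (f0 x) x))
    have hy := Nat.mod_eq_of_lt (Nat.lt_succ_of_le (colLe (f0 y) y))
    have heq' : col G f0 (f0 x) x = col G f0 (f0 y) y := by
      simpa [hx, hy] using congrArg Fin.val heq
    rcases lt_or_gt_of_ne (hf0proper x y hGxy) with h | h
    · exact colMem (f0 y) y x (hsym hGxy) h heq'
    · exact colMem (f0 x) x y hGxy h heq'.symm
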